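/- The 3-Lie algebra A_\omega^\delta with basis {L_r, M_r : r \in \mathbb{Z}} over a field of characteristic zero, with bracket [L_r, L_s, M_t] = (s-r)L_{r+s-t}, [L_r, M_s, M_t] = (t-s)M_{s+t-r} (other basis brackets zero), is simple: it is non-abelian and every ideal J (a subspace with [J, A, A] \subseteq J) is either 0 or all of A. -/

import Mathlib

noncomputable section

/-- Trilinearity of a ternary bracket. -/
def IsTrilinear (F : Type) {V : Type} [Field F] [AddCommGroup V] [Module F V]
    (br : V → V → V → V) : Prop :=
  (∀ (a : F) (u u' v w : V), br (a • u + u') v w = a • br u v w + br u' v w) ∧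
  (∀ (a : F) (u v v' w : V), br u (a • v + v') w = a • br u v w + br u v' w) ∧
  (∀ (a : F) (u v w w' : V), br u v (a • w + w') = a • br u v w + br u v w')

/-- Total skew-symmetry of a ternary bracket. -/
def IsSkew {V : Type} [AddCommGroup V] (br : V → V → V → V) : Prop :=
  ∀ u v w : V, br u v w = - br v u w ∧ br u v w = - br u w v

/-- The generalized Jacobi (Filippov) identity. -/
def Jacobi {V : Type} [AddCommGroup V] (br : V → V → V → V) : Prop :=
  ∀ u1 u2 u3 v2 v3 : V, br (br u1 u2 u3) v2 v3 =
    br (br u1 v2 v3) u2 u3 + br u1 (br u2 v2 v3) u3 + br u1 u2 (br u3 v2 v3)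

/-- The vector space with basis `{L_r, M_r : r ∈ ℤ}`. -/
abbrev A (F : Type) [Field F] : Type := (ℤ ⊕ ℤ) →₀ F

/-- The basis vector `L_r`. -/
def Lb (F : Type) [Field F] (r : ℤ) : A F := Finsupp.single (Sum.inl r) 1

/-- The basis vector `M_r`. -/
def Mb (F : Type) [Field F] (r : ℤ) : A F := Finsupp.single (Sum.inr r) 1

/-- The defining relations of the 3-Lie algebra `A_ω^δ` on basis elements. -/
def AwdBracket {F : Type} [Field F] (br : A F → A F → A F → A F) : Prop :=
  (∀ r s t : ℤ, br (Lb F r) (Lb F s) (Mb F t) = ((s : F) - (r : F)) • Lb F (r + s - t)) ∧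
  (∀ r s t : ℤ, br (Lb F r) (Mb F s) (Mb F t) = ((t : F) - (s : F)) • Mb F (s + t - r)) ∧
  (∀ r s t : ℤ, br (Lb F r) (Lb F s) (Lb F t) = 0) ∧
  (∀ r s t : ℤ, br (Mb F r) (Mb F s) (Mb F t) = 0)

section Aux

variable {F : Type} [Field F] (br : A F → A F → A F → A F)

lemma br_add_left (htri : IsTrilinear F br) (u u' v w : A F) :
    br (u + u') v w = br u v w + br u' v w := by
  have := htri.1 1 u u' v w; simpa using this

lemma br_zero_left (htri : IsTrilinear F br) (v w : A F) : br 0 v w = 0 := by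
  have := br_add_left br htri 0 0 v w
  simpa using this.symm

lemma br_smul_left (htri : IsTrilinear F br) (a : F) (u v w : A F) :
    br (a • u) v w = a • br u v w := by
  have := htri.1 a u 0 v w
  simpa [br_zero_left br htri] using this

/-- The integer eigenvalue of the operator `T = ad(L₀,M₀) + 2·ad(L₁,M₁)` on basis vectors. -/
def nev : ℤ ⊕ ℤ → ℤ
  | Sum.inl r => 2 - 3 * r
  | Sum.inr r => 3 * r - 2

lemma nev_inj : Function.Injective nev := by
  intro i j h
  cases i <;> cases j <;> simp_all [nev] <;> omega

/-- The diagonal operator. -/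
def Tdiag (x : A F) : A F :=
  br x (Lb F 0) (Mb F 0) + (2 : F) • br x (Lb F 1) (Mb F 1)

lemma Tdiag_single (htri : IsTrilinear F br) (hskew : IsSkew br) (hAwd : AwdBracket br)
    (i : ℤ ⊕ ℤ) (c : F) :
    Tdiag br (Finsupp.single i c) = ((nev i : ℤ) : F) • Finsupp.single i c := by
  cases i with
  | inl r =>
    have hc : (Finsupp.single (Sum.inl r) c : A F) = c • Lb F r := by
      simp [Lb, Finsupp.smul_single]
    have h1 : br (Lb F r) (Lb F 0) (Mb F 0) = ((0 : F) - (r : F)) • Lb F r := by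
      simpa using hAwd.1 r 0 0
    have h2 : br (Lb F r) (Lb F 1) (Mb F 1) = ((1 : F) - (r : F)) • Lb F r := by
      simpa using hAwd.1 r 1 1
    rw [hc]
    rw [Tdiag, br_smul_left br htri, br_smul_left br htri, h1, h2]
    match_scalars
    push_cast [nev]
    ring
  | inr r =>
    have hc : (Finsupp.single (Sum.inr r) c : A F) = c • Mb F r := by
      simp [Mb, Finsupp.smul_single]
    have h1 : br (Mb F r) (Lb F 0) (Mb F 0) = -(((0 : F) - (r : F)) • Mb F r) := by
      rw [(hskew (Mb F r) (Lb F 0) (Mb F 0)).1, hAwd.2.1 0 r 0]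
      norm_num
    have h2 : br (Mb F r) (Lb F 1) (Mb F 1) = -(((1 : F) - (r : F)) • Mb F r) := by
      rw [(hskew (Mb F r) (Lb F 1) (Mb F 1)).1, hAwd.2.1 1 r 1]
      simp only [add_sub_cancel_right]
      norm_num
    rw [hc]
    rw [Tdiag, br_smul_left br htri, br_smul_left br htri, h1, h2]
    match_scalars
    push_cast [nev]
    ring

lemma Tdiag_apply (htri : IsTrilinear F br) (hskew : IsSkew br) (hAwd : AwdBracket br)
    (x : A F) (k : ℤ ⊕ ℤ) :
    Tdiag br x k = ((nev k : ℤ) : F) * x k := by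
  induction x using Finsupp.induction_linear with
  | zero => simp [Tdiag, br_zero_left br htri]
  | add f g hf hg =>
    have : Tdiag br (f + g) = Tdiag br f + Tdiag br g := by
      simp only [Tdiag, br_add_left br htri, smul_add]
      abel
    rw [this]
    simp [Finsupp.add_apply, hf, hg, mul_add]
  | single i c =>
    rw [Tdiag_single br htri hskew hAwd]
    simp only [Finsupp.smul_apply, Finsupp.single_apply, smul_eq_mul]
    by_cases h : i = k <;> simp [h]

lemma extract (ev : ℤ ⊕ ℤ → F) (hev : Function.Injective ev)
    (T : A F → A F) (hTap : ∀ (x : A F) (k : ℤ ⊕ ℤ), T x k = ev k * x k)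
    (J : Submodule F (A F)) (hTJ : ∀ x ∈ J, T x ∈ J) :
    ∀ (n : ℕ) (x : A F), x.support.card = n → x ∈ J → ∀ i : ℤ ⊕ ℤ, x i ≠ 0 →
      Finsupp.single i (1 : F) ∈ J := by
  intro n
  induction n using Nat.strong_induction_on with
  | _ n IH =>
    intro x hcard hxJ i hi
    by_cases hsub : x.support ⊆ {i}
    · have hx : x = Finsupp.single i (x i) := Finsupp.support_subset_singleton.mp hsub
      have : Finsupp.single i (1 : F) = (x i)⁻¹ • x := by
        conv_rhs => rw [hx]
        rw [Finsupp.smul_single, smul_eq_mul]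
        simp [inv_mul_cancel₀ hi]
      rw [this]
      exact J.smul_mem _ hxJ
    · obtain ⟨j, hjs, hji⟩ : ∃ j ∈ x.support, j ≠ i := by
        by_contra h
        push_neg at h
        exact hsub fun k hk => Finset.mem_singleton.mpr (h k hk)
      set y : A F := T x - ev j • x with hy
      have hyJ : y ∈ J := J.sub_mem (hTJ x hxJ) (J.smul_mem _ hxJ)
      have hyap : ∀ k, y k = (ev k - ev j) * x k := by
        intro k
        simp [hy, hTap, sub_mul]
      have hys : y.support ⊆ x.support.erase j := by
        intro k hk
        rw [Finsupp.mem_support_iff, hyap] at hk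
        rcases mul_ne_zero_iff.mp hk with ⟨h1, h2⟩
        refine Finset.mem_erase.mpr ⟨?_, Finsupp.mem_support_iff.mpr h2⟩
        rintro rfl; simp at h1
      have hlt : y.support.card < n := by
        calc y.support.card ≤ (x.support.erase j).card := Finset.card_le_card hys
        _ < x.support.card := Finset.card_erase_lt_of_mem hjs
        _ = n := hcard
      have hyi : y i ≠ 0 := by
        rw [hyap]
        exact mul_ne_zero (sub_ne_zero.mpr fun h => hji (hev h).symm) hi
      exact IH _ hlt y rfl hyJ i hyi

end Aux

/-- the 3-Lie algebra `A_ω^δ` is simple. -/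
theorem stmt9 (F : Type) [Field F] [CharZero F]
    (br : A F → A F → A F → A F)
    (htri : IsTrilinear F br) (hskew : IsSkew br) (hjac : Jacobi br)
    (hAwd : AwdBracket br) :
    (¬ ∀ u v w : A F, br u v w = 0) ∧
    (∀ J : Submodule F (A F), (∀ u v w : A F, u ∈ J → br u v w ∈ J) →
      J = ⊥ ∨ J = ⊤) := by
  constructor
  · -- non-abelian
    intro h
    have h1 := hAwd.1 0 1 0
    rw [h (Lb F 0) (Lb F 1) (Mb F 0)] at h1
    norm_num at h1
    exact one_ne_zero (Finsupp.single_eq_zero.mp (h1.symm ▸ rfl : Lb F 1 = 0))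
  · intro J hJ
    by_cases hbot : J = ⊥
    · exact Or.inl hbot
    right
    -- get a nonzero element of J
    obtain ⟨x, hxJ, hx0⟩ := Submodule.exists_mem_ne_zero_of_ne_bot hbot
    obtain ⟨i, hi⟩ : ∃ i, x i ≠ 0 := by
      by_contra h
      push_neg at h
      exact hx0 (Finsupp.ext h)
    -- J is invariant under Tdiag
    have hTJ : ∀ z ∈ J, Tdiag br z ∈ J := by
      intro z hz
      exact J.add_mem (hJ z _ _ hz) (J.smul_mem _ (hJ z _ _ hz))
    have hsing : Finsupp.single i (1 : F) ∈ J :=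
      extract (fun k => ((nev k : ℤ) : F))
        (Function.Injective.comp Int.cast_injective nev_inj)
        (Tdiag br) (Tdiag_apply br htri hskew hAwd) J hTJ x.support.card x rfl hxJ i hi
    -- from one basis vector, generate all
    have hLgen : ∀ r : ℤ, Lb F r ∈ J → ∀ n : ℤ, Lb F n ∈ J := by
      intro r hr n
      have h := hAwd.1 r (r + 1) (2 * r + 1 - n)
      have hidx : r + (r + 1) - (2 * r + 1 - n) = n := by ring
      have hco : ((r + 1 : ℤ) : F) - (r : F) = 1 := by push_cast; ring
      rw [hidx, hco, one_smul] at h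
      rw [← h]
      exact hJ _ _ _ hr
    have hMfromL : (∀ n : ℤ, Lb F n ∈ J) → ∀ n : ℤ, Mb F n ∈ J := by
      intro hL n
      have h := hAwd.2.1 (1 - n) 0 1
      have hidx : 0 + 1 - (1 - n) = n := by ring
      have hco : ((1 : ℤ) : F) - ((0 : ℤ) : F) = 1 := by push_cast; ring
      rw [hidx] at h
      norm_num at h
      rw [← h]
      exact hJ _ _ _ (hL (1 - n))
    have hMgen : ∀ r : ℤ, Mb F r ∈ J → ∀ n : ℤ, Mb F n ∈ J := by
      intro r hr n
      have h := hAwd.2.1 (2 * r + 1 - n) r (r + 1)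
      have hidx : r + (r + 1) - (2 * r + 1 - n) = n := by ring
      have hco : ((r + 1 : ℤ) : F) - (r : F) = 1 := by push_cast; ring
      rw [hidx, hco, one_smul] at h
      have hsk := (hskew (Mb F r) (Lb F (2 * r + 1 - n)) (Mb F (r + 1))).1
      have : Mb F n = -(br (Mb F r) (Lb F (2 * r + 1 - n)) (Mb F (r + 1))) := by
        rw [hsk, neg_neg, h]
      rw [this]
      exact J.neg_mem (hJ _ _ _ hr)
    have hLfromM : (∀ n : ℤ, Mb F n ∈ J) → ∀ n : ℤ, Lb F n ∈ J := by
      intro hM n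
      have h := hAwd.1 0 1 (1 - n)
      have hidx : 0 + 1 - (1 - n) = n := by ring
      have hco : ((1 : ℤ) : F) - ((0 : ℤ) : F) = 1 := by push_cast; ring
      rw [hidx] at h
      norm_num at h
      have hsk1 := (hskew (Mb F (1 - n)) (Lb F 0) (Lb F 1)).1
      have hsk2 := (hskew (Lb F 0) (Mb F (1 - n)) (Lb F 1)).2
      have : Lb F n = br (Mb F (1 - n)) (Lb F 0) (Lb F 1) := by
        rw [hsk1, hsk2, neg_neg, h]
      rw [this]
      exact hJ _ _ _ (hM (1 - n))
    have hall : (∀ n : ℤ, Lb F n ∈ J) ∧ (∀ n : ℤ, Mb F n ∈ J) := by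
      cases i with
      | inl r =>
        have hL := hLgen r hsing
        exact ⟨hL, hMfromL hL⟩
      | inr r =>
        have hM := hMgen r hsing
        exact ⟨hLfromM hM, hM⟩
    -- conclude J = ⊤
    rw [eq_top_iff]
    intro z _
    induction z using Finsupp.induction_linear with
    | zero => exact J.zero_mem
    | add f g hf hg => exact J.add_mem (hf trivial) (hg trivial)
    | single j c =>
      have : (Finsupp.single j c : A F) = c • Finsupp.single j 1 := by
        rw [Finsupp.smul_single, smul_eq_mul, mul_one]
      rw [this]
      cases j with
      | inl r => exact J.smul_mem _ (hall.1 r)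
      | inr r => exact J.smul_mem _ (hall.2 r)
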